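/- Fix n ∈ ℕ and real numbers a, b. For h > 0 let b_n(h) and u_n(h) denote the continuous −1 Hahn (type 1) recurrence coefficients evaluated at parameters (α,β,γ) = (h, √(h/2)·b, (2a−1)/4). Then as h → ∞ one has b_n(h)/√(2h) → (−1)^n·b, and u_n(h)/(2h) → n/2 if n is even and u_n(h)/(2h) → (n+2a)/2 if n is odd. -/

import Mathlib

open Filter

private lemma aux_ratio (c d k m : ℝ) (hm : 0 < m) :
    Tendsto (fun h : ℝ => (c + k * h) / (d + m * h)) atTop (nhds (k / m)) := by
  have h1 : Tendsto (fun h : ℝ => c / h + k) atTop (nhds (0 + k)) :=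
    (tendsto_const_nhds.div_atTop tendsto_id).add tendsto_const_nhds
  have h2 : Tendsto (fun h : ℝ => d / h + m) atTop (nhds (0 + m)) :=
    (tendsto_const_nhds.div_atTop tendsto_id).add tendsto_const_nhds
  have h3 := h1.div h2 (by positivity)
  rw [zero_add, zero_add] at h3
  refine h3.congr' ?_
  filter_upwards [eventually_gt_atTop (max 1 (|d| / m))] with h hh
  have h1' : (1:ℝ) < h := lt_of_le_of_lt (le_max_left _ _) hh
  have h0 : h ≠ 0 := by linarith
  have hden : d + m * h ≠ 0 := by
    have : |d| / m < h := lt_of_le_of_lt (le_max_right _ _) hh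
    have : |d| < m * h := by rwa [div_lt_iff₀ hm, mul_comm] at this
    have := neg_abs_le d
    nlinarith
  show (c / h + k) / (d / h + m) = (c + k * h) / (d + m * h)
  field_simp

private lemma aux_sqrt (h : ℝ) (hh : 0 < h) : Real.sqrt (h / 2) = Real.sqrt (2 * h) / 2 := by
  rw [show h / 2 = 2 * h / 4 by ring, Real.sqrt_div (by linarith),
    show Real.sqrt 4 = 2 by rw [show (4:ℝ) = 2 ^ 2 by norm_num, Real.sqrt_sq (by norm_num)]]

/-- The diagonal recurrence coefficient `bₙ` of the continuous `-1` Hahn polynomials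
of the first type, parameters `(α,β,γ)`. -/
noncomputable def cM1Hahn1b (α β γ : ℝ) (n : ℕ) : ℝ :=
  if Even n then
    2 * β - 2 * β * (n : ℝ) / ((n : ℝ) + 2 * α + 2 * γ + 1)
  else
    2 * β - 2 * β * ((n : ℝ) + 4 * α + 4 * γ + 3) / ((n : ℝ) + 2 * α + 2 * γ + 2)

/-- The off-diagonal recurrence coefficient `uₙ` of the continuous `-1` Hahn polynomials
of the first type, parameters `(α,β,γ)`; `|z|²` is the squared modulus `Complex.normSq`. -/
noncomputable def cM1Hahn1u (α β γ : ℝ) (n : ℕ) : ℝ :=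
  if Even n then
    (n : ℝ) * ((n : ℝ) + 4 * α + 4 * γ + 2) *
        Complex.normSq (((n : ℝ) + 2 * α + 2 * γ + 1 : ℝ) + (4 * β : ℝ) * Complex.I) /
      (4 * ((n : ℝ) + 2 * α + 2 * γ + 1) ^ 2)
  else
    ((n : ℝ) + 4 * α + 1) * ((n : ℝ) + 4 * γ + 1) * ((n : ℝ) + 2 * α + 2 * γ + 1) ^ 2 /
      (4 * ((n : ℝ) + 2 * α + 2 * γ + 1) ^ 2)

/-- the `h → ∞` limit of the continuous `-1` Hahn (type 1) recurrence
coefficients with parameters `(h, √(h/2)·b, (2a-1)/4)` yields the recurrence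
coefficients of the monic `-1` Meixner–Pollaczek polynomials `Mₙ(x;a,b)`. -/
theorem continuousM1Hahn_to_M1MeixnerPollaczek_limit (n : ℕ) (a b : ℝ) :
    Tendsto (fun h : ℝ =>
        cM1Hahn1b h (Real.sqrt (h / 2) * b) ((2 * a - 1) / 4) n / Real.sqrt (2 * h))
      atTop (nhds ((-1 : ℝ) ^ n * b)) ∧
    Tendsto (fun h : ℝ =>
        cM1Hahn1u h (Real.sqrt (h / 2) * b) ((2 * a - 1) / 4) n / (2 * h))
      atTop (nhds (if Even n then (n : ℝ) / 2 else ((n : ℝ) + 2 * a) / 2)) := by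
  -- common eventual facts
  have hev : ∀ᶠ h : ℝ in atTop, 0 < h ∧ ((n : ℝ) + 2 * h + 2 * ((2 * a - 1) / 4) + 1) ≠ 0 ∧
      ((n : ℝ) + 2 * h + 2 * ((2 * a - 1) / 4) + 2) ≠ 0 := by
    filter_upwards [eventually_gt_atTop (|a| + 1)] with h hh
    have ha := neg_abs_le a
    have hpos : 0 < h := lt_of_le_of_lt (by positivity) hh
    refine ⟨hpos, by push_cast; nlinarith [Nat.cast_nonneg (α := ℝ) n],
      by push_cast; nlinarith [Nat.cast_nonneg (α := ℝ) n]⟩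
  constructor
  · rcases Nat.even_or_odd n with hn | hn
    · -- even case: limit b
      rw [hn.neg_one_pow, one_mul]
      have hD : Tendsto (fun h : ℝ => ((n : ℝ) + 2 * ((2*a-1)/4) + 1 + 2 * h)) atTop atTop :=
        tendsto_atTop_add_const_left _ _ (tendsto_id.const_mul_atTop two_pos)
      have hlim : Tendsto (fun h : ℝ =>
          b * (1 - (n : ℝ) / ((n : ℝ) + 2 * ((2*a-1)/4) + 1 + 2 * h))) atTop (nhds (b * (1 - 0))) :=
        tendsto_const_nhds.mul (tendsto_const_nhds.sub (tendsto_const_nhds.div_atTop hD))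
      rw [sub_zero, mul_one] at hlim
      refine hlim.congr' ?_
      filter_upwards [hev] with h ⟨h0, hD1, _⟩
      have hs : (0:ℝ) < Real.sqrt (2 * h) := Real.sqrt_pos.mpr (by linarith)
      simp only [cM1Hahn1b, if_pos hn, aux_sqrt h h0]
      have hD1' : ((n : ℝ) + 2 * ((2*a-1)/4) + 1 + 2 * h) ≠ 0 := by
        intro hc; apply hD1; linarith
      rw [show ((n:ℝ) + 2 * h + 2 * ((2*a-1)/4) + 1) = ((n : ℝ) + 2 * ((2*a-1)/4) + 1 + 2 * h) by ring]
      field_simp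
    · -- odd case: limit -b
      rw [hn.neg_one_pow]
      have hR : Tendsto (fun h : ℝ =>
          b * (1 - ((n : ℝ) + 4*((2*a-1)/4) + 3 + 4 * h) / ((n : ℝ) + 2*((2*a-1)/4) + 2 + 2 * h)))
          atTop (nhds (b * (1 - 4 / 2))) :=
        tendsto_const_nhds.mul (tendsto_const_nhds.sub (aux_ratio _ _ 4 2 two_pos))
      have : b * (1 - 4 / 2) = -1 * b := by ring
      rw [this] at hR
      refine hR.congr' ?_
      filter_upwards [hev] with h ⟨h0, _, hD2⟩
      have hs : (0:ℝ) < Real.sqrt (2 * h) := Real.sqrt_pos.mpr (by linarith)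
      simp only [cM1Hahn1b, if_neg (Nat.not_even_iff_odd.mpr hn), aux_sqrt h h0]
      have hD2' : ((n : ℝ) + 2*((2*a-1)/4) + 2 + 2 * h) ≠ 0 := by
        intro hc; apply hD2; linarith
      rw [show ((n:ℝ) + 2 * h + 2 * ((2*a-1)/4) + 2) = ((n : ℝ) + 2*((2*a-1)/4) + 2 + 2 * h) by ring,
        show ((n:ℝ) + 4 * h + 4 * ((2*a-1)/4) + 3) = ((n : ℝ) + 4*((2*a-1)/4) + 3 + 4 * h) by ring]
      field_simp
  · rcases Nat.even_or_odd n with hn | hn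
    · rw [if_pos hn]
      -- limit n/2 : f = n * ((c2 + 4h)/(0+8h)) * (1 + (8b²h/D)·(1/D))
      set c2 : ℝ := (n : ℝ) + 4*((2*a-1)/4) + 2 with hc2
      set d1 : ℝ := (n : ℝ) + 2*((2*a-1)/4) + 1 with hd1
      have hDat : Tendsto (fun h : ℝ => d1 + 2 * h) atTop atTop :=
        tendsto_atTop_add_const_left _ _ (tendsto_id.const_mul_atTop two_pos)
      have t1 : Tendsto (fun h : ℝ => (c2 + 4 * h) / (0 + 8 * h)) atTop (nhds (4/8)) :=
        aux_ratio c2 0 4 8 (by norm_num)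
      have t2 : Tendsto (fun h : ℝ => (0 + 8 * b^2 * h) / (d1 + 2 * h)) atTop (nhds (8*b^2/2)) := by
        have := aux_ratio 0 d1 (8*b^2) 2 two_pos
        refine this.congr (fun h => by ring_nf)
      have t3 : Tendsto (fun h : ℝ => (1:ℝ) / (d1 + 2 * h)) atTop (nhds 0) :=
        tendsto_const_nhds.div_atTop hDat
      have t4 : Tendsto (fun h : ℝ =>
          (n : ℝ) * ((c2 + 4 * h) / (0 + 8 * h)) *
            (1 + ((0 + 8 * b^2 * h) / (d1 + 2 * h)) * ((1:ℝ) / (d1 + 2 * h))))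
          atTop (nhds ((n : ℝ) * (4/8) * (1 + (8*b^2/2) * 0))) :=
        (tendsto_const_nhds.mul t1).mul (tendsto_const_nhds.add (t2.mul t3))
      have : (n : ℝ) * (4/8) * (1 + (8*b^2/2) * 0) = (n : ℝ) / 2 := by ring
      rw [this] at t4
      refine t4.congr' ?_
      filter_upwards [hev] with h ⟨h0, hD1, _⟩
      have hD1' : d1 + 2 * h ≠ 0 := by rw [hd1]; intro hc; apply hD1; linarith
      simp only [cM1Hahn1u, if_pos hn]
      rw [show ((4 * (Real.sqrt (h/2) * b) : ℝ) : ℂ) = (((4 * (Real.sqrt (h/2) * b)) : ℝ) : ℂ) from rfl]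
      rw [Complex.normSq_add_mul_I]
      rw [show ((n:ℝ) + 2 * h + 2 * ((2*a-1)/4) + 1) = d1 + 2 * h by rw [hd1]; ring]
      have hsq : (Real.sqrt (h/2))^2 = h/2 := Real.sq_sqrt (by linarith)
      have key : (4 * (Real.sqrt (h/2) * b))^2 = 8 * b^2 * h := by
        rw [mul_pow, mul_pow, hsq]; ring
      rw [key]
      rw [hc2]
      field_simp
      ring
    · rw [if_neg (Nat.not_even_iff_odd.mpr hn)]
      set d1 : ℝ := (n : ℝ) + 2*((2*a-1)/4) + 1 with hd1
      have t1 : Tendsto (fun h : ℝ => ((n:ℝ) + 2*a) * (((n:ℝ) + 1 + 4 * h) / (0 + 8 * h)))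
          atTop (nhds (((n:ℝ) + 2*a) * (4/8))) :=
        tendsto_const_nhds.mul (aux_ratio _ 0 4 8 (by norm_num))
      have : ((n:ℝ) + 2*a) * (4/8) = ((n : ℝ) + 2*a)/2 := by ring
      rw [this] at t1
      refine t1.congr' ?_
      filter_upwards [hev] with h ⟨h0, hD1, _⟩
      have hD1' : d1 + 2 * h ≠ 0 := by rw [hd1]; intro hc; apply hD1; linarith
      simp only [cM1Hahn1u, if_neg (Nat.not_even_iff_odd.mpr hn)]
      rw [show ((n:ℝ) + 2 * h + 2 * ((2*a-1)/4) + 1) = d1 + 2 * h by rw [hd1]; ring]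
      field_simp
      ring
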